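/- For β = 3 and α = (1/3,1/3,1/3), the third-order Taylor polynomial of f_{β,α} at the point ν = (1/3,1/3,1/3), expressed in coordinates x = (√3/2)(ν₁-ν₂), y = (1/2)(3ν₃-1), equals f_{β,α}(1/3,1/3,1/3) - y³/3 + x²y; i.e. all first and second order terms vanish and the cubic part is x²y - y³/3. -/
import Mathlib

lemma log_taylor3 (t : ℝ) (ht : |t| ≤ 1/2) :
    |Real.log (1+t) - (t - t^2/2 + t^3/3)| ≤ 2*t^4 := by
  have h := Real.abs_log_sub_add_sum_range_le (x := -t) (by rw [abs_neg]; linarith) 3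
  simp [Finset.sum_range_succ] at h
  have h2 : |t|^4 = t^4 := by rw [← abs_pow, abs_of_nonneg (by positivity)]
  have h4 : |t|^4 / (1 - |t|) ≤ 2 * t^4 := by
    rw [h2, div_le_iff₀ (by linarith [abs_nonneg t])]
    nlinarith [pow_nonneg (abs_nonneg t) 4, sq_nonneg (t^2)]
  calc |Real.log (1+t) - (t - t^2/2 + t^3/3)|
      = |-t + t^2/(1+1) + (-t)^3/(2+1) + Real.log (1+t)| := by
        congr 1; ring
    _ ≤ |t|^4 / (1 - |t|) := h
    _ ≤ 2 * t^4 := h4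

lemma psi_bound (u : ℝ) (hu : |u| ≤ 1/6) :
    |(1/3+u) * Real.log (1+3*u) - 3/2*(1/3+u)^2 + 1/6 + 3/2*u^3| ≤ 90*u^4 := by
  have ht : |3*u| ≤ 1/2 := by rw [abs_mul]; simp; linarith [abs_nonneg u, hu]
  set R := Real.log (1+3*u) - ((3*u) - (3*u)^2/2 + (3*u)^3/3) with hRdef
  have hR : |R| ≤ 2*(3*u)^4 := log_taylor3 (3*u) ht
  have hlog : Real.log (1+3*u) = ((3*u) - (3*u)^2/2 + (3*u)^3/3) + R := by rw [hRdef]; ring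
  have hid : (1/3+u) * Real.log (1+3*u) - 3/2*(1/3+u)^2 + 1/6 + 3/2*u^3
      = (1/3+u)*R + 9*u^4 := by rw [hlog]; ring
  rw [hid]
  have h13 : |1/3+u| ≤ 1/2 := by
    cases abs_le.mp hu with
    | intro h1 h2 => rw [abs_le]; constructor <;> linarith
  calc |(1/3+u)*R + 9*u^4| ≤ |(1/3+u)*R| + |9*u^4| := abs_add_le _ _
    _ ≤ (1/2) * (2*(3*u)^4) + 9*u^4 := by
        rw [abs_mul, abs_of_nonneg (show (0:ℝ) ≤ 9*u^4 by positivity)]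
        exact add_le_add (mul_le_mul h13 hR (abs_nonneg R) (by norm_num)) le_rfl
    _ ≤ 90*u^4 := by nlinarith [pow_nonneg (sq_nonneg u) 2]

/-- The free energy f_{3,uniform} in symmetric coordinates
x = (√3/2)(ν₁-ν₂), y = (1/2)(3ν₃-1). -/
noncomputable def pottsSymmetric (p : ℝ × ℝ) : ℝ :=
  let ν₁ := (1 - p.2)/3 + p.1/Real.sqrt 3
  let ν₂ := (1 - p.2)/3 - p.1/Real.sqrt 3
  let ν₃ := (1 + 2*p.2)/3;
  -(3/2) * (ν₁^2 + ν₂^2 + ν₃^2)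
    + ν₁ * Real.log (ν₁/(1/3)) + ν₂ * Real.log (ν₂/(1/3))
    + ν₃ * Real.log (ν₃/(1/3))

open Asymptotics

noncomputable def psiAux (u : ℝ) : ℝ :=
  (1/3+u) * Real.log (1+3*u) - 3/2*(1/3+u)^2 + 1/6 + 3/2*u^3

lemma psiAux_bound (u : ℝ) (hu : |u| ≤ 1/6) : |psiAux u| ≤ 90*u^4 := by
  unfold psiAux; exact psi_bound u hu

lemma potts_zero : pottsSymmetric (0, 0) = -(1/2) := by
  simp [pottsSymmetric]
  norm_num

lemma key0 (s y : ℝ) :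
    -(3/2) * (((1-y)/3+s)^2 + ((1-y)/3-s)^2 + ((1+2*y)/3)^2)
      + ((1-y)/3+s) * Real.log (1+3*(s-y/3))
      + ((1-y)/3-s) * Real.log (1+3*(-s-y/3))
      + ((1+2*y)/3) * Real.log (1+3*(2*y/3))
      - (-(1/2) - y^3/3 + 3*s^2*y)
    = psiAux (s-y/3) + psiAux (-s-y/3) + psiAux (2*y/3) := by
  unfold psiAux; ring

lemma potts_key (p : ℝ × ℝ) :
    pottsSymmetric p - (pottsSymmetric (0, 0) - p.2^3/3 + p.1^2 * p.2)
      = psiAux (p.1/Real.sqrt 3 - p.2/3) + psiAux (-(p.1/Real.sqrt 3) - p.2/3)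
        + psiAux (2*p.2/3) := by
  rw [potts_zero]
  have e1 : ((1 - p.2)/3 + p.1/Real.sqrt 3)/(1/3) = 1 + 3*(p.1/Real.sqrt 3 - p.2/3) := by
    ring
  have e2 : ((1 - p.2)/3 - p.1/Real.sqrt 3)/(1/3) = 1 + 3*(-(p.1/Real.sqrt 3) - p.2/3) := by
    ring
  have e3 : ((1 + 2*p.2)/3)/(1/3) = 1 + 3*(2*p.2/3) := by ring
  have h3' : 3*(p.1/Real.sqrt 3)^2 = p.1^2 := by
    rw [div_pow, Real.sq_sqrt (by norm_num : (0:ℝ) ≤ 3)]; ring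
  show -(3/2) * (((1 - p.2)/3 + p.1/Real.sqrt 3)^2 + ((1 - p.2)/3 - p.1/Real.sqrt 3)^2
        + ((1 + 2*p.2)/3)^2)
      + ((1 - p.2)/3 + p.1/Real.sqrt 3) * Real.log (((1 - p.2)/3 + p.1/Real.sqrt 3)/(1/3))
      + ((1 - p.2)/3 - p.1/Real.sqrt 3) * Real.log (((1 - p.2)/3 - p.1/Real.sqrt 3)/(1/3))
      + ((1 + 2*p.2)/3) * Real.log (((1 + 2*p.2)/3)/(1/3))
      - (-(1/2) - p.2^3/3 + p.1^2 * p.2) = _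
  rw [e1, e2, e3]
  have hk := key0 (p.1/Real.sqrt 3) p.2
  have e4 : -(p.1/Real.sqrt 3) - p.2/3 = -(p.1/Real.sqrt 3) - p.2/3 := rfl
  linear_combination hk + p.2 * h3'
  
/-- Third-order Taylor expansion of f_{3,uniform} at the uniform distribution
in symmetric coordinates: all first and second order terms vanish and the
cubic part is `x²y - y³/3` — the germ of the elliptic umbilic. -/
theorem elliptic_umbilic_taylor :
    (fun p : ℝ × ℝ =>
        pottsSymmetric p - (pottsSymmetric (0, 0) - p.2^3/3 + p.1^2 * p.2))
      =o[nhds (0 : ℝ × ℝ)] fun p => ‖p‖^3 := by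
  have hbig : (fun p : ℝ × ℝ =>
        pottsSymmetric p - (pottsSymmetric (0, 0) - p.2^3/3 + p.1^2 * p.2))
      =O[nhds (0 : ℝ × ℝ)] fun p => ‖p‖^4 := by
    rw [isBigO_iff]
    refine ⟨4320, ?_⟩
    filter_upwards [Metric.ball_mem_nhds (0 : ℝ × ℝ) (show (0:ℝ) < 1/12 by norm_num)]
      with p hp
    rw [Metric.mem_ball, dist_zero_right] at hp
    have hn : (0:ℝ) ≤ ‖p‖ := norm_nonneg p
    have h1 : |p.1| ≤ ‖p‖ := by simpa [Real.norm_eq_abs] using norm_fst_le p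
    have h2 : |p.2| ≤ ‖p‖ := by simpa [Real.norm_eq_abs] using norm_snd_le p
    have hs3 : (1:ℝ) ≤ Real.sqrt 3 := by
      rw [show (1:ℝ) = Real.sqrt 1 by simp]
      exact Real.sqrt_le_sqrt (by norm_num)
    have hsabs : |p.1 / Real.sqrt 3| ≤ ‖p‖ := by
      rw [abs_div, abs_of_nonneg (by positivity : (0:ℝ) ≤ Real.sqrt 3)]
      exact (div_le_self (abs_nonneg _) hs3).trans h1
    set s := p.1 / Real.sqrt 3 with hs
    have h23 : |p.2/3| ≤ ‖p‖ := by
      rw [abs_div]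
      calc |p.2| / |(3:ℝ)| = |p.2|/3 := by norm_num
        _ ≤ ‖p‖ := by linarith [abs_nonneg p.2]
    have hu1 : |s - p.2/3| ≤ 2*‖p‖ := by
      have := abs_add_le s (-(p.2/3))
      rw [abs_neg] at this
      have h' : |s - p.2/3| ≤ |s| + |p.2/3| := by
        simpa [sub_eq_add_neg] using this
      linarith
    have hu2 : |-s - p.2/3| ≤ 2*‖p‖ := by
      have := abs_add_le (-s) (-(p.2/3))
      rw [abs_neg, abs_neg] at this
      have h' : |-s - p.2/3| ≤ |s| + |p.2/3| := by
        simpa [sub_eq_add_neg] using this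
      linarith
    have hu3 : |2*p.2/3| ≤ 2*‖p‖ := by
      rw [abs_div, abs_mul]
      calc |(2:ℝ)| * |p.2| / |(3:ℝ)| = 2*|p.2|/3 := by norm_num
        _ ≤ 2*‖p‖ := by linarith [abs_nonneg p.2]
    have hsm : 2*‖p‖ ≤ 1/6 := by linarith
    have pb1 := psiAux_bound (s - p.2/3) (hu1.trans hsm)
    have pb2 := psiAux_bound (-s - p.2/3) (hu2.trans hsm)
    have pb3 := psiAux_bound (2*p.2/3) (hu3.trans hsm)
    have p4 : ∀ u : ℝ, |u| ≤ 2*‖p‖ → u^4 ≤ 16*‖p‖^4 := by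
      intro u hu
      have : |u|^4 ≤ (2*‖p‖)^4 := pow_le_pow_left₀ (abs_nonneg u) hu 4
      rw [← abs_pow, abs_of_nonneg (by positivity : (0:ℝ) ≤ u^4)] at this
      nlinarith
    have q1 := p4 _ hu1
    have q2 := p4 _ hu2
    have q3 := p4 _ hu3
    rw [potts_key p, Real.norm_eq_abs,
      Real.norm_of_nonneg (by positivity : (0:ℝ) ≤ ‖p‖^4)]
    rw [← hs]
    calc |psiAux (s - p.2/3) + psiAux (-s - p.2/3) + psiAux (2*p.2/3)|
        ≤ |psiAux (s - p.2/3)| + |psiAux (-s - p.2/3)| + |psiAux (2*p.2/3)| := by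
          exact (abs_add_le _ _).trans (by gcongr; exact abs_add_le _ _)
      _ ≤ 4320 * ‖p‖^4 := by nlinarith
  have hlit : (fun p : ℝ × ℝ => ‖p‖^4) =o[nhds (0 : ℝ × ℝ)] fun p => ‖p‖^3 := by
    rw [isLittleO_iff]
    intro c hc
    filter_upwards [Metric.ball_mem_nhds (0 : ℝ × ℝ) hc] with p hp
    rw [Metric.mem_ball, dist_zero_right] at hp
    have hn : (0:ℝ) ≤ ‖p‖ := norm_nonneg p
    rw [Real.norm_of_nonneg (by positivity), Real.norm_of_nonneg (by positivity)]
    calc ‖p‖^4 = ‖p‖ * ‖p‖^3 := by ring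
      _ ≤ c * ‖p‖^3 := mul_le_mul_of_nonneg_right hp.le (by positivity)
  exact hbig.trans_isLittleO hlit
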